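/- Let p be prime and n > 1 a natural. For any matrices A, B, Q ∈ 𝕃_p^{n×n} such that det(Q) ≠ 0 and A Q = Q B, the LCA F_A over (ℤ/pℤ)^n determined by A is positively expansive if and only if the LCA F_B over (ℤ/pℤ)^n determined by B is positively expansive. -/

import Mathlib

open LaurentPolynomial
open scoped Classical

/-- `𝕃 m`: Laurent polynomials over `ℤ/mℤ`. -/
abbrev Lm (m : ℕ) := LaurentPolynomial (ZMod m)

/-- `deg⁺` of a Laurent polynomial: the max of its support (`⊥ = -∞` for `0`). -/
noncomputable def degP {m : ℕ} (α : Lm m) : WithBot ℤ := α.coeff.support.max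

/-- `deg⁻` of a Laurent polynomial: the min of its support (`⊤ = +∞` for `0`). -/
noncomputable def degM {m : ℕ} (α : Lm m) : WithTop ℤ := α.coeff.support.min

/-- A monic polynomial `π(t) = α₀ + α₁ t + ⋯ + α_{n-1} t^{n-1} + tⁿ` over `𝕃 m`
is *expansive* if `α₀ ≠ 0`, `deg⁺(α₀) > 0`, `deg⁺(α₀) > deg⁺(αᵢ)`,
`deg⁻(α₀) < 0` and `deg⁻(α₀) < deg⁻(αᵢ)` for all `1 ≤ i ≤ n-1`. -/
def ExpansivePoly {m : ℕ} (π : Polynomial (Lm m)) : Prop :=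
  π.coeff 0 ≠ 0 ∧
  ((0 : WithBot ℤ) < degP (π.coeff 0) ∧
    ∀ i : ℕ, 1 ≤ i → i < π.natDegree → degP (π.coeff i) < degP (π.coeff 0)) ∧
  (degM (π.coeff 0) < (0 : WithTop ℤ) ∧
    ∀ i : ℕ, 1 ≤ i → i < π.natDegree → degM (π.coeff 0) < degM (π.coeff i))

/-- A matrix over `𝕃 m` is expansive if its characteristic polynomial is. -/
noncomputable def ExpansiveMatrix {m n : ℕ} (A : Matrix (Fin n) (Fin n) (Lm m)) : Prop :=
  ExpansivePoly A.charpoly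

/-- The Tychonoff distance on the configuration space `(ℤ → S)`. -/
noncomputable def tdist {S : Type*} (c c' : ℤ → S) : ℝ :=
  if c = c' then 0
  else (2 : ℝ) ^ (-((sInf {k : ℕ | ∃ j : ℤ, j.natAbs = k ∧ c j ≠ c' j} : ℕ) : ℤ))

/-- A map on the configuration space is positively expansive if for some `ε > 0`
any two distinct configurations are eventually `≥ ε` apart. -/
def PosExpansive {S : Type*} (F : (ℤ → S) → (ℤ → S)) : Prop :=
  ∃ ε : ℝ, 0 < ε ∧ ∀ c c' : ℤ → S, c ≠ c' →
    ∃ ℓ : ℕ, ε ≤ tdist (F^[ℓ] c) (F^[ℓ] c')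

/-- The linear CA over `(ℤ/mℤ)ⁿ` determined by a matrix `A ∈ 𝕃_m^{n×n}`:
`F_A(c)_i = ∑_{k ∈ ℤ} A⁽ᵏ⁾ · c_{i-k}` where `A⁽ᵏ⁾` is the coefficient matrix of `Xᵏ` in `A`.
The same formula gives the action of `A` on two-sided formal power series `𝕊_m^n`. -/
noncomputable def lcaFun {m n : ℕ} (A : Matrix (Fin n) (Fin n) (Lm m)) :
    (ℤ → Fin n → ZMod m) → (ℤ → Fin n → ZMod m) :=
  fun c i a => ∑ b, Finsupp.sum (A a b).coeff (fun k coef => coef * c (i - k) b)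

/-- `Left(𝕊ⁿ_m, s)`: two-sided series with `deg⁺ = s`. -/
def SLeft {V : Type*} [Zero V] (s : ℤ) : Set (ℤ → V) :=
  {υ | (∀ j : ℤ, s < j → υ j = 0) ∧ υ s ≠ 0}

/-- `Left*(𝕊ⁿ_m, s)`: two-sided series with `deg⁺ ≤ s`. -/
def SLeftStar {V : Type*} [Zero V] (s : ℤ) : Set (ℤ → V) :=
  {υ | ∀ j : ℤ, s < j → υ j = 0}

/-- `Right(𝕊ⁿ_m, s)`: two-sided series with `deg⁻ = s`. -/
def SRight {V : Type*} [Zero V] (s : ℤ) : Set (ℤ → V) :=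
  {υ | (∀ j : ℤ, j < s → υ j = 0) ∧ υ s ≠ 0}

/-- `Right*(𝕊ⁿ_m, s)`: two-sided series with `deg⁻ ≥ s`. -/
def SRightStar {V : Type*} [Zero V] (s : ℤ) : Set (ℤ → V) :=
  {υ | ∀ j : ℤ, j < s → υ j = 0}

/-- Reduction of a Laurent polynomial over `ℤ/mℤ` modulo `q` (for `q ∣ m`). -/
noncomputable def lmod {m q : ℕ} (h : q ∣ m) (α : Lm m) : Lm q :=
  AddMonoidAlgebra.ofCoeff (Finsupp.mapRange (ZMod.castHom h (ZMod q)) (map_zero _) α.coeff)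

/-- Entrywise reduction of a matrix of Laurent polynomials modulo `q`. -/
noncomputable def matMod {m q n : ℕ} (h : q ∣ m) (B : Matrix (Fin n) (Fin n) (Lm m)) :
    Matrix (Fin n) (Fin n) (Lm q) :=
  fun a b => lmod h (B a b)

/-- `deg⁺` on the field of fractions of `𝕃 p`: `deg⁺(α/β) = deg⁺(α) - deg⁺(β)`,
computed on a representation given by `IsLocalization.sec`; `deg⁺ 0 = ⊥`. -/
noncomputable def degPF {p : ℕ} (φ : FractionRing (Lm p)) : WithBot ℤ :=
  if φ = 0 then ⊥
  else ((WithBot.unbotD 0 (degP ((IsLocalization.sec (nonZeroDivisors (Lm p)) φ).1))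
        - WithBot.unbotD 0 (degP (((IsLocalization.sec (nonZeroDivisors (Lm p)) φ).2 : Lm p))) : ℤ) : WithBot ℤ)

/-- The `(x, y)` entry (with `ℕ`-indices) of the companion matrix of a polynomial `π`
viewed as a `d × d` matrix: subdiagonal entries `1`,
last column `(-π.coeff 0, …, -π.coeff (d-1))ᵀ`, the rest `0`. -/
def companionEntry {R : Type*} [CommRing R] (d : ℕ) (π : Polynomial R) (x y : ℕ) : R :=
  if y = d - 1 then -π.coeff x else if x = y + 1 then 1 else 0

/-- The companion matrix (as a `d × d` matrix) of a polynomial `π`. -/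
def companionMatrix {R : Type*} [CommRing R] (d : ℕ) (π : Polynomial R) :
    Matrix (Fin d) (Fin d) R :=
  fun a b => companionEntry d π a b

/-- A matrix is in rational canonical form if it is block diagonal with blocks the
companion matrices of monic polynomials `π₁, …, π_s` of degree at least one with
`πᵢ ∣ πⱼ` for `i ≤ j`.  The blocks are described by the offsets `off i` of their
top-left corners. -/
def IsRCF {R : Type*} [CommRing R] {n : ℕ} (C : Matrix (Fin n) (Fin n) R) : Prop :=
  ∃ (s : ℕ) (π : Fin s → Polynomial R) (off : Fin (s + 1) → ℕ),
    (∀ i, (π i).Monic) ∧ (∀ i, 1 ≤ (π i).natDegree) ∧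
    (∀ i j, i ≤ j → π i ∣ π j) ∧
    off 0 = 0 ∧ off (Fin.last s) = n ∧
    (∀ i : Fin s, off i.succ = off i.castSucc + (π i).natDegree) ∧
    (∀ (i : Fin s) (a b : Fin n),
      off i.castSucc ≤ (a : ℕ) → (a : ℕ) < off i.succ →
      off i.castSucc ≤ (b : ℕ) → (b : ℕ) < off i.succ →
      C a b = companionEntry (π i).natDegree (π i)
        ((a : ℕ) - off i.castSucc) ((b : ℕ) - off i.castSucc)) ∧
    (∀ a b : Fin n,
      (∀ i : Fin s, ¬(off i.castSucc ≤ (a : ℕ) ∧ (a : ℕ) < off i.succ ∧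
        off i.castSucc ≤ (b : ℕ) ∧ (b : ℕ) < off i.succ)) → C a b = 0)


-- ======================= auxiliary lemmas =======================

private lemma conv_sum {R : Type*} [CommRing R] (α β : AddMonoidAlgebra R ℤ) (f : ℤ → R) :
    (α * β).coeff.sum (fun k r => r * f k)
      = α.coeff.sum (fun k r => r * β.coeff.sum (fun k' r' => r' * f (k + k'))) := by
  induction α using AddMonoidAlgebra.induction_linear with
  | zero => simp
  | add α₁ α₂ h₁ h₂ =>
    rw [add_mul, AddMonoidAlgebra.coeff_add, AddMonoidAlgebra.coeff_add, Finsupp.sum_add_index' (by simp) (by intros; ring),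
      Finsupp.sum_add_index' (by simp) (by intros; ring), h₁, h₂]
  | single k r =>
    rw [AddMonoidAlgebra.coeff_single, Finsupp.sum_single_index (by simp)]
    induction β using AddMonoidAlgebra.induction_linear with
    | zero => simp
    | add β₁ β₂ h₁ h₂ =>
      rw [mul_add, AddMonoidAlgebra.coeff_add, Finsupp.sum_add_index' (by simp) (by intros; ring), h₁, h₂,
        AddMonoidAlgebra.coeff_add, Finsupp.sum_add_index' (by simp) (by intros; ring), mul_add]
    | single k' r' =>
      erw [AddMonoidAlgebra.single_mul_single]
      show Finsupp.sum (Finsupp.single (k + k') (r * r')) _ = _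
      rw [AddMonoidAlgebra.coeff_single, Finsupp.sum_single_index (by simp), Finsupp.sum_single_index (by simp), mul_assoc]

private lemma lcaFun_mul {p n : ℕ} (M N : Matrix (Fin n) (Fin n) (Lm p))
    (c : ℤ → Fin n → ZMod p) :
    lcaFun (M * N) c = lcaFun M (lcaFun N c) := by
  funext i a
  simp only [lcaFun, Matrix.mul_apply]
  have step : ∀ b' : Fin n,
      Finsupp.sum (∑ b, M a b * N b b').coeff (fun k coef => coef * c (i - k) b')
        = ∑ b, Finsupp.sum (M a b).coeff (fun k r =>
            r * Finsupp.sum (N b b').coeff (fun k' r' => r' * c (i - k - k') b')) := by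
    intro b'
    rw [AddMonoidAlgebra.coeff_sum, ← Finsupp.sum_finset_sum_index (by simp) (by intros; ring)]
    refine Finset.sum_congr rfl fun b _ => ?_
    rw [conv_sum (M a b) (N b b') (fun k => c (i - k) b')]
    refine Finsupp.sum_congr fun k _ => ?_
    congr 1
    refine Finsupp.sum_congr fun k' _ => ?_
    rw [sub_add_eq_sub_sub]
  rw [Finset.sum_congr rfl fun b' _ => step b', Finset.sum_comm]
  refine Finset.sum_congr rfl fun b _ => ?_
  simp only [Finsupp.sum, Finset.mul_sum]
  exact Finset.sum_comm

private lemma lcaFun_sub {p n : ℕ} (M : Matrix (Fin n) (Fin n) (Lm p))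
    (x y : ℤ → Fin n → ZMod p) :
    lcaFun M (x - y) = lcaFun M x - lcaFun M y := by
  funext i a
  simp only [lcaFun, Pi.sub_apply]
  rw [← Finset.sum_sub_distrib]
  refine Finset.sum_congr rfl fun b _ => ?_
  simp only [Finsupp.sum, mul_sub]
  rw [← Finset.sum_sub_distrib]

private lemma lcaFun_zero {p n : ℕ} (M : Matrix (Fin n) (Fin n) (Lm p)) :
    lcaFun M 0 = 0 := by
  funext i a
  simp [lcaFun, Finsupp.sum]

private lemma tdist_nonneg {S : Type*} (x y : ℤ → S) : 0 ≤ tdist x y := by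
  unfold tdist; split
  · exact le_refl 0
  · positivity

private lemma tdist_pos {S : Type*} {x y : ℤ → S} (h : x ≠ y) : 0 < tdist x y := by
  rw [tdist, if_neg h]; positivity

private lemma tdist_sub {S : Type*} [AddGroup S] (x y : ℤ → S) :
    tdist x y = tdist (x - y) 0 := by
  unfold tdist
  have h1 : (x = y) = (x - y = 0) := by
    rw [eq_iff_iff]; exact sub_eq_zero.symm
  have h2 : {k : ℕ | ∃ j : ℤ, j.natAbs = k ∧ x j ≠ y j}
      = {k : ℕ | ∃ j : ℤ, j.natAbs = k ∧ (x - y) j ≠ (0 : ℤ → S) j} := by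
    ext k
    simp [sub_ne_zero]
  rw [h1, h2]

private lemma tdist_lca_le {p n : ℕ} (Q : Matrix (Fin n) (Fin n) (Lm p)) (r : ℕ)
    (hr : ∀ a b : Fin n, ∀ k ∈ (Q a b).coeff.support, k.natAbs ≤ r)
    (u v : ℤ → Fin n → ZMod p) :
    tdist (lcaFun Q u) (lcaFun Q v) ≤ 2 ^ (r : ℤ) * tdist u v := by
  by_cases huv : u = v
  · subst huv
    simp [tdist]
  by_cases hF : lcaFun Q u = lcaFun Q v
  · rw [tdist, if_pos hF]
    exact mul_nonneg (by positivity) (tdist_nonneg u v)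
  set N := sInf {k : ℕ | ∃ j : ℤ, j.natAbs = k ∧ u j ≠ v j} with hN
  have hagree : ∀ j : ℤ, j.natAbs < N → u j = v j := by
    intro j hj
    by_contra h
    have hle : N ≤ j.natAbs := Nat.sInf_le ⟨j, rfl, h⟩
    omega
  set N' := sInf {k : ℕ | ∃ j : ℤ, j.natAbs = k ∧ lcaFun Q u j ≠ lcaFun Q v j} with hN'
  have hS'ne : {k : ℕ | ∃ j : ℤ, j.natAbs = k ∧ lcaFun Q u j ≠ lcaFun Q v j}.Nonempty := by
    obtain ⟨j, hj⟩ : ∃ j, lcaFun Q u j ≠ lcaFun Q v j := by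
      by_contra h; push_neg at h; exact hF (funext h)
    exact ⟨j.natAbs, j, rfl, hj⟩
  obtain ⟨j0, hj0, hne0⟩ := Nat.sInf_mem hS'ne
  have hclaim : N ≤ N' + r := by
    by_contra h
    push_neg at h
    apply hne0
    funext a
    simp only [lcaFun]
    refine Finset.sum_congr rfl fun b _ => ?_
    refine Finsupp.sum_congr fun k hk => ?_
    have hkr := hr a b k hk
    have htri : (j0 - k).natAbs ≤ j0.natAbs + k.natAbs := Int.natAbs_sub_le j0 k
    have : (j0 - k).natAbs < N := by
      have hj0N : j0.natAbs = N' := hj0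
      omega
    rw [hagree _ this]
  rw [tdist, if_neg hF, tdist, if_neg huv, ← hN, ← hN']
  calc (2 : ℝ) ^ (-(N' : ℤ)) ≤ 2 ^ ((r : ℤ) - N) := by
        apply zpow_le_zpow_right₀ (by norm_num)
        omega
    _ = 2 ^ (r : ℤ) * 2 ^ (-(N : ℤ)) := by
        rw [show (r : ℤ) - N = (r : ℤ) + -(N : ℤ) by ring,
          zpow_add₀ (by norm_num : (2 : ℝ) ≠ 0)]

/-- configurations annihilated by the scalar `g`. -/
private def kerSet (p n : ℕ) (g : Lm p) : Set (ℤ → Fin n → ZMod p) :=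
  {d | ∀ (i : ℤ) (a : Fin n), Finsupp.sum g.coeff (fun k r => r * d (i - k) a) = 0}

private lemma kerSet_window_zero {p n : ℕ} (hp : p.Prime) (g : Lm p)
    (hne : g.coeff.support.Nonempty)
    (d : ℤ → Fin n → ZMod p) (hd : d ∈ kerSet p n g)
    (hwin : ∀ j : ℤ, 0 ≤ j → j < g.coeff.support.max' hne - g.coeff.support.min' hne → ∀ a, d j a = 0) :
    d = 0 := by
  haveI := Fact.mk hp
  set Mx := g.coeff.support.max' hne with hMx
  set mn := g.coeff.support.min' hne with hmn
  have hmnMx : mn ≤ Mx := Finset.min'_le _ _ (Finset.max'_mem _ _)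
  have main : ∀ t : ℕ, ∀ j : ℤ, -(t : ℤ) ≤ j → j < (Mx - mn) + t → ∀ a, d j a = 0 := by
    intro t
    induction t with
    | zero =>
      intro j h1 h2 a
      exact hwin j (by omega) (by omega) a
    | succ t ih =>
      intro j h1 h2 a
      by_cases hcase : -(t : ℤ) ≤ j ∧ j < (Mx - mn) + t
      · exact ih j hcase.1 hcase.2 a
      have hj : j = (Mx - mn) + t ∨ j = -(t : ℤ) - 1 := by
        push_cast at h1 h2 ⊢
        omega
      rcases hj with hj | hj
      · have hrec := hd (Mx + t) a
        simp only [Finsupp.sum] at hrec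
        rw [Finset.sum_eq_single_of_mem mn (Finset.min'_mem _ _) ?_] at hrec
        · have hix : Mx + (t : ℤ) - mn = j := by omega
          rw [hix] at hrec
          have hgmn : g.coeff mn ≠ 0 := Finsupp.mem_support_iff.mp (Finset.min'_mem _ _)
          exact (mul_eq_zero.mp hrec).resolve_left hgmn
        · intro k hk hkne
          have h1k : mn ≤ k := Finset.min'_le _ _ hk
          have h2k : k ≤ Mx := Finset.le_max' _ _ hk
          have hz : d (Mx + t - k) a = 0 := ih _ (by omega) (by omega) a
          rw [hz, mul_zero]
      · have hrec := hd (Mx - t - 1) a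
        simp only [Finsupp.sum] at hrec
        rw [Finset.sum_eq_single_of_mem Mx (Finset.max'_mem _ _) ?_] at hrec
        · have hix : Mx - (t : ℤ) - 1 - Mx = j := by omega
          rw [hix] at hrec
          have hgMx : g.coeff Mx ≠ 0 := Finsupp.mem_support_iff.mp (Finset.max'_mem _ _)
          exact (mul_eq_zero.mp hrec).resolve_left hgMx
        · intro k hk hkne
          have h1k : mn ≤ k := Finset.min'_le _ _ hk
          have h2k : k ≤ Mx := Finset.le_max' _ _ hk
          have hz : d (Mx - t - 1 - k) a = 0 := ih _ (by omega) (by omega) a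
          rw [hz, mul_zero]
  funext j a
  exact main (j.natAbs + 1) j (by omega) (by omega) a

private lemma kerSet_finite {p n : ℕ} (hp : p.Prime) (g : Lm p) (hg : g ≠ 0) :
    (kerSet p n g).Finite := by
  haveI := Fact.mk hp
  haveI : NeZero p := ⟨hp.pos.ne'⟩
  have hne : g.coeff.support.Nonempty := Finsupp.support_nonempty_iff.mpr (mt AddMonoidAlgebra.coeff_eq_zero.mp hg)
  set Mx := g.coeff.support.max' hne with hMx
  set mn := g.coeff.support.min' hne with hmn
  have hmnMx : mn ≤ Mx := Finset.min'_le _ _ (Finset.max'_mem _ _)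
  set R : ℕ := (Mx - mn).toNat with hR
  have hinj : Function.Injective
      (fun d : kerSet p n g => fun (j : Fin R) (a : Fin n) =>
        (d : ℤ → Fin n → ZMod p) ((j.val : ℤ)) a) := by
    intro d d' hdd
    have hsub : (d : ℤ → Fin n → ZMod p) - (d' : ℤ → Fin n → ZMod p) ∈ kerSet p n g := by
      intro i a
      have h1 := d.2 i a
      have h2 := d'.2 i a
      simp only [Finsupp.sum] at h1 h2 ⊢
      simp only [Pi.sub_apply, mul_sub]
      rw [Finset.sum_sub_distrib, h1, h2, sub_zero]
    have hzero : (d : ℤ → Fin n → ZMod p) - (d' : ℤ → Fin n → ZMod p) = 0 := by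
      refine kerSet_window_zero hp g hne _ hsub ?_
      intro j hj0 hjlt a
      have hjR : j.toNat < R := by omega
      have hEq := congrFun (congrFun hdd (⟨j.toNat, hjR⟩ : Fin R)) a
      simp only at hEq
      have hco : ((⟨j.toNat, hjR⟩ : Fin R).val : ℤ) = j := by
        simp [Int.toNat_of_nonneg hj0]
      rw [hco] at hEq
      simp [Pi.sub_apply, hEq]
    exact Subtype.ext (sub_eq_zero.mp hzero)
  have : Finite (kerSet p n g) := Finite.of_injective _ hinj
  exact Set.finite_coe_iff.mp this

private lemma onedir {p n : ℕ} (hp : p.Prime) (A B Q : Matrix (Fin n) (Fin n) (Lm p))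
    (hQ : Q.det ≠ 0) (hAQ : A * Q = Q * B) :
    PosExpansive (lcaFun A) → PosExpansive (lcaFun B) := by
  haveI := Fact.mk hp
  rintro ⟨ε, hε, hE⟩
  have hsemi : Function.Semiconj (lcaFun Q) (lcaFun B) (lcaFun A) := by
    intro c
    rw [← lcaFun_mul, ← hAQ, lcaFun_mul]
  have hKfin : (kerSet p n Q.det).Finite := kerSet_finite hp _ hQ
  have hKfin' : {d | d ∈ kerSet p n Q.det ∧ d ≠ 0}.Finite :=
    hKfin.subset (Set.sep_subset _ _)
  set s := hKfin'.toFinset with hs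
  set δ : ℝ := if h : s.Nonempty then s.inf' h (fun e => tdist e 0) else 1 with hδdef
  have hδpos : 0 < δ := by
    rw [hδdef]; split_ifs with h
    · rw [Finset.lt_inf'_iff]
      intro e he
      rw [Set.Finite.mem_toFinset] at he
      exact tdist_pos he.2
    · exact one_pos
  have hδle : ∀ e, e ∈ kerSet p n Q.det → e ≠ 0 → δ ≤ tdist e 0 := by
    intro e h1 h2
    have hes : e ∈ s := (Set.Finite.mem_toFinset _).mpr ⟨h1, h2⟩
    rw [hδdef, dif_pos ⟨e, hes⟩]
    exact Finset.inf'_le _ hes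
  set r : ℕ := Finset.univ.sup
    (fun ab : Fin n × Fin n => (Q ab.1 ab.2).coeff.support.sup Int.natAbs) with hrdef
  have hrb : ∀ a b : Fin n, ∀ k ∈ (Q a b).coeff.support, k.natAbs ≤ r := by
    intro a b k hk
    calc k.natAbs ≤ (Q a b).coeff.support.sup Int.natAbs := Finset.le_sup hk
      _ ≤ r := by
        simpa using Finset.le_sup (f := fun ab : Fin n × Fin n =>
          (Q ab.1 ab.2).coeff.support.sup Int.natAbs) (Finset.mem_univ (a, b))
  refine ⟨min (ε / 2 ^ (r : ℤ)) δ, lt_min (div_pos hε (by positivity)) hδpos, ?_⟩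
  intro c c' hcc
  by_cases hQc : lcaFun Q c = lcaFun Q c'
  · refine ⟨0, ?_⟩
    simp only [Function.iterate_zero, id_eq]
    have hdK : c - c' ∈ kerSet p n Q.det := by
      intro i a
      have h0 : lcaFun Q (c - c') = 0 := by
        rw [lcaFun_sub, hQc, sub_self]
      have h1 : lcaFun (Q.adjugate * Q) (c - c') = 0 := by
        rw [lcaFun_mul, h0, lcaFun_zero]
      rw [Matrix.adjugate_mul] at h1
      have h3 : ∀ b : Fin n,
          Finsupp.sum ((Q.det • (1 : Matrix (Fin n) (Fin n) (Lm p))) a b).coeff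
            (fun k r => r * (c - c') (i - k) b)
          = if a = b then Finsupp.sum Q.det.coeff (fun k r => r * (c - c') (i - k) b) else 0 := by
        intro b
        by_cases hab : a = b
        · rw [if_pos hab]
          congr 1
          simp [Matrix.smul_apply, Matrix.one_apply, hab, smul_eq_mul]
        · rw [if_neg hab]
          have hz : (Q.det • (1 : Matrix (Fin n) (Fin n) (Lm p))) a b = 0 := by
            simp [Matrix.smul_apply, Matrix.one_apply, hab]
          rw [hz, AddMonoidAlgebra.coeff_zero, Finsupp.sum_zero_index]
      have h2 := congrFun (congrFun h1 i) a
      simp only [lcaFun, Pi.zero_apply] at h2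
      rw [Finset.sum_congr rfl (fun b _ => h3 b), Finset.sum_ite_eq Finset.univ a,
        if_pos (Finset.mem_univ a)] at h2
      exact h2
    have hdne : c - c' ≠ 0 := sub_ne_zero.mpr hcc
    calc min (ε / 2 ^ (r : ℤ)) δ ≤ δ := min_le_right _ _
      _ ≤ tdist (c - c') 0 := hδle _ hdK hdne
      _ = tdist c c' := (tdist_sub c c').symm
  · obtain ⟨ℓ, hℓ⟩ := hE (lcaFun Q c) (lcaFun Q c') hQc
    refine ⟨ℓ, ?_⟩
    rw [← (hsemi.iterate_right ℓ) c, ← (hsemi.iterate_right ℓ) c'] at hℓ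
    have hlip := tdist_lca_le Q r hrb ((lcaFun B)^[ℓ] c) ((lcaFun B)^[ℓ] c')
    have hεt : ε ≤ 2 ^ (r : ℤ) * tdist ((lcaFun B)^[ℓ] c) ((lcaFun B)^[ℓ] c') :=
      le_trans hℓ hlip
    calc min (ε / 2 ^ (r : ℤ)) δ ≤ ε / 2 ^ (r : ℤ) := min_le_left _ _
      _ ≤ tdist ((lcaFun B)^[ℓ] c) ((lcaFun B)^[ℓ] c') := by
          rw [div_le_iff₀ (by positivity)]
          calc ε ≤ 2 ^ (r : ℤ) * tdist ((lcaFun B)^[ℓ] c) ((lcaFun B)^[ℓ] c') := hεt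
            _ = tdist ((lcaFun B)^[ℓ] c) ((lcaFun B)^[ℓ] c') * 2 ^ (r : ℤ) := mul_comm _ _

/-- Lemma `main2`: if `A Q = Q B` with `det Q ≠ 0` over `𝕃_p`, then the
LCA determined by `A` is positively expansive iff the LCA determined by `B` is. -/
theorem stmt6 (p n : ℕ) (hp : p.Prime) (hn : 1 < n)
    (A B Q : Matrix (Fin n) (Fin n) (Lm p))
    (hQ : Q.det ≠ 0) (hAQ : A * Q = Q * B) :
    PosExpansive (lcaFun A) ↔ PosExpansive (lcaFun B) := by
  haveI := Fact.mk hp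
  have hadj : B * Q.adjugate = Q.adjugate * A := by
    have h1 : (Q.adjugate * Q) * (B * Q.adjugate) = Q.det • (B * Q.adjugate) := by
      rw [Matrix.adjugate_mul, Matrix.smul_mul, Matrix.one_mul]
    have h2 : (Q.adjugate * A) * (Q * Q.adjugate) = Q.det • (Q.adjugate * A) := by
      rw [Matrix.mul_adjugate, Matrix.mul_smul, Matrix.mul_one]
    have key : Q.det • (B * Q.adjugate) = Q.det • (Q.adjugate * A) := by
      rw [← h1, ← h2, mul_assoc, ← mul_assoc Q B, ← hAQ, mul_assoc, mul_assoc]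
    refine Matrix.ext_iff.mp fun i j => ?_
    have hentry := Matrix.ext_iff.mpr key i j
    simp only [Matrix.smul_apply, smul_eq_mul] at hentry
    exact mul_left_cancel₀ hQ hentry
  have hQ' : Q.adjugate.det ≠ 0 := by
    rw [Matrix.det_adjugate]
    exact pow_ne_zero _ hQ
  exact ⟨onedir hp A B Q hQ hAQ, onedir hp B A Q.adjugate hQ' hadj⟩
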